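/- Let f = T_r^k + g with k ≥ 1, where g ∈ K[T_1,…,T_{r−1}] involves only the first r−1 variables and f is weighted homogeneous of degree k·w_r. Then for every z ∈ K^r with f(z) = 0, the orbit cone ω(z) equals the convex cone in ℚ^n generated over ℚ_{≥0} by the weights w_j with 1 ≤ j ≤ r−1 and z_j ≠ 0. In particular, every orbit cone of a point of the hypersurface {f = 0} is of the form cone(w_j : j ∈ J) for some subset J ⊆ {1,…,r−1}. -/

import Mathlib

/-- The convex cone in `ℚ^n` generated over `ℚ_{≥0}` by a set `S`:
all finite nonnegative rational combinations of elements of `S`. -/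
def coneGen {n : ℕ} (S : Set (Fin n → ℚ)) : Set (Fin n → ℚ) :=
  {v | ∃ (s : Finset (Fin n → ℚ)) (c : (Fin n → ℚ) → ℚ),
    (∀ w ∈ s, 0 ≤ c w ∧ w ∈ S) ∧ v = ∑ w ∈ s, c w • w}

/-- A polynomial `h ∈ K[T_1,…,T_r]` is weighted homogeneous of degree `d ∈ ℤ^n`
with respect to weights `w : Fin r → ℤ^n` if every monomial `T^ν` occurring in `h`
satisfies `ν_1 w_1 + ⋯ + ν_r w_r = d`. -/
def IsWeightedHom {K : Type*} [CommSemiring K] {r n : ℕ} (w : Fin r → Fin n → ℤ)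
    (d : Fin n → ℤ) (h : MvPolynomial (Fin r) K) : Prop :=
  ∀ m ∈ h.support, ∑ i, (m i : ℤ) • w i = d

/-- The orbit cone `ω(z)` of a point `z ∈ K^r`: the convex cone in `ℚ^n`
generated over `ℚ_{≥0}` by all `d ∈ ℤ^n` admitting a weighted homogeneous
polynomial `h` of degree `d` with `h(z) ≠ 0`. -/
def orbitCone {K : Type*} [CommSemiring K] {r n : ℕ} (w : Fin r → Fin n → ℤ)
    (z : Fin r → K) : Set (Fin n → ℚ) :=
  coneGen {v | ∃ (d : Fin n → ℤ) (h : MvPolynomial (Fin r) K),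
    IsWeightedHom w d h ∧ MvPolynomial.eval z h ≠ 0 ∧ v = fun j => (d j : ℚ)}

section Aux
variable {n : ℕ} {S T : Set (Fin n → ℚ)}

lemma mem_coneGen_of_mem {v : Fin n → ℚ} (hv : v ∈ S) : v ∈ coneGen S := by
  refine ⟨{v}, fun _ => 1, ?_, by simp⟩
  intro w hw
  rw [Finset.mem_singleton] at hw
  exact ⟨zero_le_one, hw ▸ hv⟩

lemma zero_mem_coneGen : (0 : Fin n → ℚ) ∈ coneGen S :=
  ⟨∅, fun _ => 0, by simp, by simp⟩

lemma add_mem_coneGen {a b : Fin n → ℚ} (ha : a ∈ coneGen S) (hb : b ∈ coneGen S) :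
    a + b ∈ coneGen S := by
  classical
  obtain ⟨s1, c1, h1, rfl⟩ := ha
  obtain ⟨s2, c2, h2, rfl⟩ := hb
  refine ⟨s1 ∪ s2, fun w => (if w ∈ s1 then c1 w else 0) + (if w ∈ s2 then c2 w else 0), ?_, ?_⟩
  · intro w hw
    constructor
    · apply add_nonneg <;> [skip; skip] <;> split_ifs with h <;>
        first | exact (h1 w h).1 | exact (h2 w h).1 | exact le_refl 0
    · rcases Finset.mem_union.mp hw with h | h
      · exact (h1 w h).2
      · exact (h2 w h).2
  · simp only [add_smul, Finset.sum_add_distrib, ite_smul, zero_smul]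
    rw [Finset.sum_ite_mem, Finset.sum_ite_mem, Finset.union_inter_cancel_left,
      Finset.union_inter_cancel_right]

lemma smul_mem_coneGen {c : ℚ} (hc : 0 ≤ c) {a : Fin n → ℚ} (ha : a ∈ coneGen S) :
    c • a ∈ coneGen S := by
  obtain ⟨s, cf, h, rfl⟩ := ha
  refine ⟨s, fun w => c * cf w, fun w hw => ⟨mul_nonneg hc (h w hw).1, (h w hw).2⟩, ?_⟩
  rw [Finset.smul_sum]
  exact Finset.sum_congr rfl fun w _ => (mul_smul c (cf w) w).symm

lemma sum_mem_coneGen {ι : Type*} {t : Finset ι} {a : ι → ℚ} {u : ι → (Fin n → ℚ)}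
    (h : ∀ i ∈ t, 0 ≤ a i ∧ u i ∈ coneGen S) : ∑ i ∈ t, a i • u i ∈ coneGen S := by
  classical
  induction t using Finset.induction with
  | empty => simpa using zero_mem_coneGen
  | @insert x t hx ih =>
    rw [Finset.sum_insert hx]
    exact add_mem_coneGen
      (smul_mem_coneGen (h x (Finset.mem_insert_self _ _)).1 (h x (Finset.mem_insert_self _ _)).2)
      (ih fun i hi => h i (Finset.mem_insert_of_mem hi))

lemma coneGen_subset (hST : S ⊆ coneGen T) : coneGen S ⊆ coneGen T := by
  rintro v ⟨s, c, h, rfl⟩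
  exact sum_mem_coneGen fun w hw => ⟨(h w hw).1, hST (h w hw).2⟩

lemma coneGen_mono (hST : S ⊆ T) : coneGen S ⊆ coneGen T :=
  coneGen_subset fun v hv => mem_coneGen_of_mem (hST hv)

end Aux

lemma exists_good_monomial {K : Type*} [Field K] {r : ℕ} (z : Fin r → K)
    (h : MvPolynomial (Fin r) K) (hne : MvPolynomial.eval z h ≠ 0) :
    ∃ m ∈ h.support, ∀ i, m i ≠ 0 → z i ≠ 0 := by
  rw [MvPolynomial.eval_eq'] at hne
  obtain ⟨m, hm, hm0⟩ := Finset.exists_ne_zero_of_sum_ne_zero hne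
  refine ⟨m, hm, fun i hi hzi => ?_⟩
  apply hm0
  rw [Finset.prod_eq_zero (Finset.mem_univ i) (by rw [hzi, zero_pow hi]), mul_zero]

/-- Let `f = T_r ^ k + g` with `k ≥ 1`, where `g` involves only the first `r − 1`
variables and `f` is weighted homogeneous of degree `k • w_r`. Then for every
`z ∈ K^r` with `f(z) = 0`, the orbit cone `ω(z)` equals the convex cone in `ℚ^n`
generated over `ℚ_{≥0}` by the weights `w_j` with `j ≠ r` and `z_j ≠ 0`. -/
theorem orbitCone_of_hypersurface_point
    {K : Type*} [Field K] {r n : ℕ} (hr : 2 ≤ r) (hn : 1 ≤ n)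
    (w : Fin r → Fin n → ℤ) (k : ℕ) (hk : 1 ≤ k)
    (last : Fin r) (hlast : (last : ℕ) = r - 1)
    (g f : MvPolynomial (Fin r) K)
    (hg : ∀ m ∈ g.support, m last = 0)
    (hf : f = MvPolynomial.X last ^ k + g)
    (hfhom : IsWeightedHom w ((k : ℤ) • w last) f)
    (z : Fin r → K) (hz : MvPolynomial.eval z f = 0) :
    orbitCone w z =
      coneGen {v | ∃ j : Fin r, j ≠ last ∧ z j ≠ 0 ∧ v = fun t => (w j t : ℚ)} := by
  classical
  set T : Set (Fin n → ℚ) :=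
    {v | ∃ j : Fin r, j ≠ last ∧ z j ≠ 0 ∧ v = fun t => (w j t : ℚ)} with hT
  -- helper : sums of nonneg multiples of good weights lie in coneGen T
  have helper : ∀ (t : Finset (Fin r)) (a : Fin r → ℚ),
      (∀ i ∈ t, 0 ≤ a i) → (∀ i ∈ t, a i ≠ 0 → i ≠ last ∧ z i ≠ 0) →
      (∑ i ∈ t, a i • (fun s => ((w i s : ℤ) : ℚ))) ∈ coneGen T := by
    intro t a ha hgood
    have hsum : ∑ i ∈ t, a i • (fun s => ((w i s : ℤ) : ℚ))
        = ∑ i ∈ t.filter (fun i => a i ≠ 0), a i • (fun s => ((w i s : ℤ) : ℚ)) := by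
      refine (Finset.sum_filter_of_ne ?_).symm
      intro i _ hfi
      intro ha0
      exact hfi (by rw [ha0, zero_smul])
    rw [hsum]
    apply sum_mem_coneGen
    intro i hi
    rw [Finset.mem_filter] at hi
    obtain ⟨hit, hia⟩ := hi
    obtain ⟨h1, h2⟩ := hgood i hit hia
    exact ⟨ha i hit, mem_coneGen_of_mem ⟨i, h1, h2, rfl⟩⟩
  apply Set.Subset.antisymm
  · -- orbitCone ⊆ coneGen T
    apply coneGen_subset
    rintro v ⟨d, h, hhom, hne, rfl⟩
    obtain ⟨m, hm, hzm⟩ := exists_good_monomial z h hne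
    have hd := hhom m hm
    have key : (fun t => ((d t : ℤ) : ℚ))
        = ∑ i, ((m i : ℕ) : ℚ) • (fun s => ((w i s : ℤ) : ℚ)) := by
      funext t
      have := congrFun hd t
      simp only [Finset.sum_apply, Pi.smul_apply, smul_eq_mul] at this ⊢
      rw [← this]
      push_cast
      rfl
    rw [key]
    by_cases hml : m last = 0
    · exact helper Finset.univ _ (fun i _ => by positivity)
        (fun i _ hia => by
          have hmi : m i ≠ 0 := fun h0 => hia (by simp [h0])
          refine ⟨fun he => hmi (he ▸ hml), hzm i hmi⟩)
    · -- z last ≠ 0, use g to rewrite w last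
      have hzl : z last ≠ 0 := hzm last hml
      have hgne : MvPolynomial.eval z g ≠ 0 := by
        intro h0
        rw [hf] at hz
        simp only [map_add, map_pow, MvPolynomial.eval_X, h0, add_zero] at hz
        exact hzl (pow_eq_zero_iff (by omega) |>.mp hz)
      obtain ⟨m', hm', hzm'⟩ := exists_good_monomial z g hgne
      have hm'last : m' last = 0 := hg m' hm'
      have hm'f : m' ∈ f.support := by
        rw [MvPolynomial.mem_support_iff, hf, MvPolynomial.coeff_add,
          MvPolynomial.coeff_X_pow]
        rw [if_neg, zero_add]
        · exact MvPolynomial.mem_support_iff.mp hm'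
        · intro he
          have h2 : (Finsupp.single last k) last = m' last := by rw [he]
          rw [Finsupp.single_eq_same, hm'last] at h2
          omega
      have hm'hom := hfhom m' hm'f
      -- the scalar identity over ℚ
      have hkQ : ((k : ℚ)) ≠ 0 := by positivity
      have hwlast : ((m last : ℕ) : ℚ) • (fun s => ((w last s : ℤ) : ℚ))
          = (((m last : ℕ) : ℚ) * (k : ℚ)⁻¹) •
              ∑ i, ((m' i : ℕ) : ℚ) • (fun s => ((w i s : ℤ) : ℚ)) := by
        funext t
        have := congrFun hm'hom t
        simp only [Finset.sum_apply, Pi.smul_apply, smul_eq_mul] at this ⊢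
        have hq : ∑ i, ((m' i : ℕ) : ℚ) * ((w i t : ℤ) : ℚ)
            = (k : ℚ) * ((w last t : ℤ) : ℚ) := by exact_mod_cast this
        rw [hq]
        field_simp
      rw [← Finset.add_sum_erase _ _ (Finset.mem_univ last), hwlast]
      apply add_mem_coneGen
      · apply smul_mem_coneGen (by positivity)
        exact helper Finset.univ _ (fun i _ => by positivity)
          (fun i _ hia => by
            have hmi : m' i ≠ 0 := fun h0 => hia (by simp [h0])
            exact ⟨fun he => hmi (he ▸ hm'last), hzm' i hmi⟩)
      · exact helper (Finset.univ.erase last) _ (fun i _ => by positivity)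
          (fun i hi hia => by
            have hmi : m i ≠ 0 := fun h0 => hia (by simp [h0])
            exact ⟨Finset.ne_of_mem_erase hi, hzm i hmi⟩)
  · -- coneGen T ⊆ orbitCone
    apply coneGen_mono
    rintro v ⟨j, hj, hzj, rfl⟩
    refine ⟨w j, MvPolynomial.X j, ?_, by simpa using hzj, rfl⟩
    intro m hm
    rw [MvPolynomial.support_X, Finset.mem_singleton] at hm
    subst hm
    simp [Finsupp.single_apply]
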